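/- Let G be a countable group, (X, d) a compact metric space with an action α : G ↷ X, π : X → Y a continuous map to a compact metrizable space, η > 0, and (c_g)_{g∈G} strictly positive reals with Σ_g c_g = 1. Let f : X → [0,1]^m be continuous such that I_f × π is an η-embedding, where I_f(x) = (f(α_g(x)))_{g∈G}. Define 2δ = inf{ Σ_{g∈G} c_g ‖f(α_g(x)) − f(α_g(y))‖_∞ : x, y ∈ X, π(x) = π(y), d(x,y) ≥ η }. Then δ > 0, and for every continuous f₀ : X → [0,1]^m with ‖f − f₀‖_∞ < δ, the map I_{f₀} × π is also an η-embedding. In particular, the set A_η = { f ∈ C(X, [0,1]^m) : I_f × π is an η-embedding } is open in C(X, [0,1]^m) with the uniform norm. -/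

import Mathlib

open scoped Pointwise ENNReal
open Topology Filter

/-- An action of a group `G` on a set `X`. -/
structure GAction (G X : Type*) [Group G] where
  act : G → X → X
  act_one : ∀ x, act 1 x = x
  act_mul : ∀ g h x, act (g * h) x = act g (act h x)

/-- The dynamical sup-metric `d^α_F(x,y) = max_{g ∈ F} d(α_g x, α_g y)`. -/
noncomputable def dynMetric {G X : Type*} [Group G] (α : GAction G X)
    (d : X → X → ℝ) (F : Finset G) (x y : X) : ℝ :=
  ↑(F.sup fun g => (d (α.act g x) (α.act g y)).toNNReal)

/-- `widim_ε(X, d)`: minimal order of a finite open cover of mesh at most `ε`. -/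
noncomputable def widim {X : Type*} [TopologicalSpace X] (d : X → X → ℝ) (ε : ℝ) : ℕ :=
  sInf {n : ℕ | ∃ 𝒰 : Finset (Set X),
    (∀ U ∈ 𝒰, IsOpen U) ∧ (∀ x : X, ∃ U ∈ 𝒰, x ∈ U) ∧
    (∀ U ∈ 𝒰, ∀ x ∈ U, ∀ y ∈ U, d x y ≤ ε) ∧
    ∀ x : X, {U : Set X | U ∈ 𝒰 ∧ x ∈ U}.ncard ≤ n + 1}

/-- `F` is `(K, δ)`-invariant: `|KF \ F| ≤ δ |F|`. -/
def IsFolnerInv {G : Type*} [Group G] (K : Finset G) (δ : ℝ) (F : Finset G) : Prop :=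
  letI := Classical.decEq G
  (((K * F) \ F).card : ℝ) ≤ δ * F.card

/-- A Følner sequence of nonempty finite subsets of `G`. -/
def IsFolnerSeq {G : Type*} [Group G] (Fseq : ℕ → Finset G) : Prop :=
  (∀ n, (Fseq n).Nonempty) ∧
    ∀ (K : Finset G) (δ : ℝ), 0 < δ → ∃ N : ℕ, ∀ n ≥ N, IsFolnerInv K δ (Fseq n)

/-- `mdim_ε(X, α, d)` computed along the sequence `Fseq`. -/
noncomputable def mdimEps {G X : Type*} [Group G] [TopologicalSpace X] (α : GAction G X)
    (d : X → X → ℝ) (Fseq : ℕ → Finset G) (ε : ℝ) : ℝ≥0∞ :=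
  Filter.atTop.limsup fun n =>
    (widim (dynMetric α d (Fseq n)) ε : ℝ≥0∞) / ((Fseq n).card : ℝ≥0∞)

/-- Mean dimension `mdim(X, α) = sup_{ε > 0} mdim_ε(X, α, d)`. -/
noncomputable def mdim {G X : Type*} [Group G] [TopologicalSpace X] (α : GAction G X)
    (d : X → X → ℝ) (Fseq : ℕ → Finset G) : ℝ≥0∞ :=
  ⨆ (ε : ℝ) (_ : 0 < ε), mdimEps α d Fseq ε

/-- An `ε`-embedding: all fibers have diameter `< ε`. -/
def IsEpsEmbedding {X Z : Type*} [PseudoMetricSpace X] (f : X → Z) (ε : ℝ) : Prop :=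
  ∀ z : Z, Metric.diam (f ⁻¹' {z}) < ε

/-- The orbit map `I_f(x) = (f(α_g(x)))_{g ∈ G}` (with the index convention making it
equivariant for the shift `σ_g((x_h)_h) = (x_{g⁻¹h})_h`). -/
def Ifun {G X K : Type*} [Group G] (α : GAction G X) (f : X → K) (x : X) (g : G) : K :=
  f (α.act g⁻¹ x)

/-- Almost finiteness: clopen castles with arbitrarily invariant shapes partitioning the space. -/
def IsAlmostFinite {G Y : Type*} [Group G] [TopologicalSpace Y] (β : GAction G Y) : Prop :=
  ∀ (K : Finset G) (δ : ℝ), 0 < δ →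
    ∃ (ι : Type) (_ : Fintype ι) (W : ι → Set Y) (S : ι → Finset G),
      (∀ i, IsClopen (W i)) ∧
      (∀ i, (S i).Nonempty ∧ IsFolnerInv K δ (S i)) ∧
      (∀ i j : ι, ∀ s ∈ S i, ∀ t ∈ S j, ¬(i = j ∧ s = t) →
        Disjoint (β.act s '' W i) (β.act t '' W j)) ∧
      (⋃ i, ⋃ s ∈ S i, β.act s '' W i) = Set.univ

/-- `d` is a metric on `X` inducing the given topology. -/
def IsCompatibleMetric {X : Type*} [TopologicalSpace X] (d : X → X → ℝ) : Prop :=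
  (∀ x y, 0 ≤ d x y) ∧ (∀ x y, d x y = 0 ↔ x = y) ∧ (∀ x y, d x y = d y x) ∧
    (∀ x y z, d x z ≤ d x y + d y z) ∧
    ∀ s : Set X, IsOpen s ↔ ∀ x ∈ s, ∃ ε > 0, {y | d x y < ε} ⊆ s

/-- The shift action `σ_g((x_h)_h) = (x_{g⁻¹h})_h` of `G` on `K^G`. -/
def shiftAction (G : Type*) [Group G] (K : Type*) : GAction G (G → K) where
  act g x h := x (g⁻¹ * h)
  act_one x := by funext h; simp
  act_mul g g' x := by funext h; simp [mul_assoc]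

/-- A compact set whose points are pairwise at distance `< η` has diameter `< η`. -/
lemma diam_lt_of_isCompact {X : Type*} [MetricSpace X] {F : Set X} (hF : IsCompact F)
    {η : ℝ} (hη : 0 < η) (h : ∀ x ∈ F, ∀ y ∈ F, dist x y < η) : Metric.diam F < η := by
  rcases F.eq_empty_or_nonempty with hFe | hFne
  · simpa [hFe] using hη
  · obtain ⟨p, hp, hmax⟩ := (hF.prod hF).exists_isMaxOn (hFne.prod hFne)
      (continuous_dist.continuousOn (s := F ×ˢ F))
    calc Metric.diam F ≤ dist p.1 p.2 := by
          refine Metric.diam_le_of_forall_dist_le dist_nonneg fun x hx y hy => ?_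
          exact isMaxOn_iff.mp hmax (x, y) (Set.mk_mem_prod hx hy)
      _ < η := h p.1 hp.1 p.2 hp.2

/-- The master lemma: positivity of the infimum, and stability of the `η`-embedding
property under perturbations small compared to this infimum. -/
lemma master_lemma {G X Y : Type*} [Group G] [MetricSpace X] [CompactSpace X]
    [TopologicalSpace Y] [T2Space Y] {m : ℕ}
    (α : GAction G X) (hα : ∀ g, Continuous (α.act g))
    (π : X → Y) (hπ : Continuous π) (η : ℝ) (hη : 0 < η)
    (c : G → ℝ) (hc : ∀ g, 0 < c g) (hcs : Summable c) (hc1 : ∑' g, c g = 1)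
    (f : X → Fin m → unitInterval) (hf : Continuous f)
    (hfemb : IsEpsEmbedding (fun x => (Ifun α f x, π x)) η) :
    0 < sInf {r : ℝ≥0∞ | ∃ x y : X, π x = π y ∧ η ≤ dist x y ∧
      r = ∑' g : G, ENNReal.ofReal (c g * dist (Ifun α f x g) (Ifun α f y g))} ∧
    ∀ f₀ : X → Fin m → unitInterval, Continuous f₀ →
      (∀ x, 2 * ENNReal.ofReal (dist (f x) (f₀ x)) <
        sInf {r : ℝ≥0∞ | ∃ x y : X, π x = π y ∧ η ≤ dist x y ∧
          r = ∑' g : G, ENNReal.ofReal (c g * dist (Ifun α f x g) (Ifun α f y g))}) →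
      IsEpsEmbedding (fun x => (Ifun α f₀ x, π x)) η := by
  set S : Set ℝ≥0∞ := {r : ℝ≥0∞ | ∃ x y : X, π x = π y ∧ η ≤ dist x y ∧
      r = ∑' g : G, ENNReal.ofReal (c g * dist (Ifun α f x g) (Ifun α f y g))} with hS
  have hpos : 0 < sInf S := by
    by_contra hns
    have hs0 : sInf S = 0 := by simpa [pos_iff_ne_zero] using hns
    -- extract a minimizing sequence
    have H : ∀ n : ℕ, ∃ p : X × X, π p.1 = π p.2 ∧ η ≤ dist p.1 p.2 ∧
        (∑' g : G, ENNReal.ofReal (c g * dist (Ifun α f p.1 g) (Ifun α f p.2 g))) <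
          (((n + 1 : ℕ) : ℝ≥0∞))⁻¹ := by
      intro n
      have hlt : sInf S < (((n + 1 : ℕ) : ℝ≥0∞))⁻¹ := by
        rw [hs0]
        exact ENNReal.inv_pos.2 (by simp)
      obtain ⟨r, hrS, hrlt⟩ := sInf_lt_iff.mp hlt
      obtain ⟨x, y, h1, h2, h3⟩ := hrS
      exact ⟨(x, y), h1, h2, h3 ▸ hrlt⟩
    choose p hp1 hp2 hp3 using H
    obtain ⟨q, φ, hφ, hconv⟩ := CompactSpace.tendsto_subseq p
    have hconv1 : Filter.Tendsto (fun n => (p (φ n)).1) Filter.atTop (𝓝 q.1) :=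
      (continuous_fst.tendsto q).comp hconv
    have hconv2 : Filter.Tendsto (fun n => (p (φ n)).2) Filter.atTop (𝓝 q.2) :=
      (continuous_snd.tendsto q).comp hconv
    have hπq : π q.1 = π q.2 := by
      refine tendsto_nhds_unique (f := fun n => π ((p (φ n)).1)) (l := Filter.atTop) ?_ ?_
      · exact (hπ.tendsto q.1).comp hconv1
      · exact Filter.Tendsto.congr (fun n => (hp1 (φ n)).symm) ((hπ.tendsto q.2).comp hconv2)
    have hdq : η ≤ dist q.1 q.2 := by
      refine ge_of_tendsto' ((continuous_dist.tendsto q).comp hconv) fun n => hp2 (φ n)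
    have hIq : Ifun α f q.1 = Ifun α f q.2 := by
      funext g
      have hb : Filter.Tendsto (fun n : ℕ => (((n + 1 : ℕ) : ℝ≥0∞))⁻¹)
          Filter.atTop (𝓝 0) :=
        ENNReal.tendsto_inv_nat_nhds_zero.comp (Filter.tendsto_add_atTop_nat 1)
      have hterm : Filter.Tendsto
          (fun n => ENNReal.ofReal (c g * dist (Ifun α f (p (φ n)).1 g)
            (Ifun α f (p (φ n)).2 g))) Filter.atTop
          (𝓝 (ENNReal.ofReal (c g * dist (Ifun α f q.1 g) (Ifun α f q.2 g)))) := by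
        have hcont : Continuous (fun z : X × X =>
            ENNReal.ofReal (c g * dist (Ifun α f z.1 g) (Ifun α f z.2 g))) := by
          exact ENNReal.continuous_ofReal.comp (continuous_const.mul
            (Continuous.dist (hf.comp ((hα g⁻¹).comp continuous_fst))
              (hf.comp ((hα g⁻¹).comp continuous_snd))))
        exact (hcont.tendsto q).comp hconv
      have hle0 : ENNReal.ofReal (c g * dist (Ifun α f q.1 g) (Ifun α f q.2 g)) ≤ 0 := by
        refine le_of_tendsto_of_tendsto' hterm hb fun n => ?_
        have h1 : ENNReal.ofReal (c g * dist (Ifun α f (p (φ n)).1 g)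
            (Ifun α f (p (φ n)).2 g)) ≤
            ∑' g : G, ENNReal.ofReal (c g * dist (Ifun α f (p (φ n)).1 g)
              (Ifun α f (p (φ n)).2 g)) := ENNReal.le_tsum g
        refine (h1.trans (hp3 (φ n)).le).trans ?_
        refine ENNReal.inv_le_inv.2 ?_
        exact_mod_cast Nat.add_le_add_right (hφ.le_apply) 1
      have hz : c g * dist (Ifun α f q.1 g) (Ifun α f q.2 g) ≤ 0 :=
        ENNReal.ofReal_eq_zero.mp (le_antisymm hle0 zero_le)
      have hnn : 0 ≤ c g * dist (Ifun α f q.1 g) (Ifun α f q.2 g) :=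
        mul_nonneg (hc g).le dist_nonneg
      have hz0 : c g * dist (Ifun α f q.1 g) (Ifun α f q.2 g) = 0 := le_antisymm hz hnn
      rcases mul_eq_zero.mp hz0 with h | h
      · exact absurd h (hc g).ne'
      · exact dist_eq_zero.mp h
    -- q.1 and q.2 lie in the same fiber of (I_f, π)
    have hmem1 : q.1 ∈ (fun x => (Ifun α f x, π x)) ⁻¹' {(Ifun α f q.1, π q.1)} := rfl
    have hmem2 : q.2 ∈ (fun x => (Ifun α f x, π x)) ⁻¹' {(Ifun α f q.1, π q.1)} := by
      simp only [Set.mem_preimage, Set.mem_singleton_iff, Prod.mk.injEq]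
      exact ⟨hIq.symm, hπq.symm⟩
    have hdd : dist q.1 q.2 ≤ Metric.diam ((fun x => (Ifun α f x, π x)) ⁻¹'
        {(Ifun α f q.1, π q.1)}) :=
      Metric.dist_le_diam_of_mem (Metric.isBounded_of_compactSpace) hmem1 hmem2
    exact absurd (lt_of_le_of_lt (hdq.trans hdd) (hfemb _)) (lt_irrefl η)
  refine ⟨hpos, fun f₀ hf₀ hdist z => ?_⟩
  -- the fiber of (I_{f₀}, π) over z
  set F : Set X := (fun x => (Ifun α f₀ x, π x)) ⁻¹' {z} with hF
  have hcontF : Continuous (fun x => (Ifun α f₀ x, π x)) :=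
    (continuous_pi fun g => hf₀.comp (hα g⁻¹)).prodMk hπ
  have hFc : IsCompact F := (isClosed_singleton.preimage hcontF).isCompact
  refine diam_lt_of_isCompact hFc hη fun x hx y hy => ?_
  by_contra hge
  push_neg at hge
  have hxz : (Ifun α f₀ x, π x) = z := hx
  have hyz : (Ifun α f₀ y, π y) = z := hy
  have hI0 : Ifun α f₀ x = Ifun α f₀ y := by
    have := hxz.trans hyz.symm
    exact (Prod.mk.injEq _ _ _ _ ▸ this).1
  have hπxy : π x = π y := by
    have := hxz.trans hyz.symm
    exact (Prod.mk.injEq _ _ _ _ ▸ this).2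
  have hSmem : (∑' g : G, ENNReal.ofReal (c g * dist (Ifun α f x g) (Ifun α f y g))) ∈ S :=
    ⟨x, y, hπxy, hge, rfl⟩
  have hsle : sInf S ≤ ∑' g : G, ENNReal.ofReal (c g * dist (Ifun α f x g) (Ifun α f y g)) :=
    sInf_le hSmem
  -- get the point where dist (f x) (f₀ x) is maximal
  have hXne : Nonempty X := ⟨x⟩
  obtain ⟨x₀, -, hmax₀⟩ := isCompact_univ.exists_isMaxOn ⟨x, Set.mem_univ x⟩
    ((hf.dist hf₀).continuousOn (s := Set.univ))
  have hx₀ : ∀ w : X, dist (f w) (f₀ w) ≤ dist (f x₀) (f₀ x₀) := fun w =>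
    isMaxOn_iff.mp hmax₀ w (Set.mem_univ w)
  set D : ℝ := dist (f x₀) (f₀ x₀) with hD
  have hbound : ∀ g : G, dist (Ifun α f x g) (Ifun α f y g) ≤ 2 * D := by
    intro g
    have h4 : dist (f (α.act g⁻¹ x)) (f (α.act g⁻¹ y)) ≤
        dist (f (α.act g⁻¹ x)) (f₀ (α.act g⁻¹ x)) +
        dist (f₀ (α.act g⁻¹ x)) (f₀ (α.act g⁻¹ y)) +
        dist (f₀ (α.act g⁻¹ y)) (f (α.act g⁻¹ y)) := dist_triangle4 _ _ _ _
    have hmid : dist (f₀ (α.act g⁻¹ x)) (f₀ (α.act g⁻¹ y)) = 0 := by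
      have : Ifun α f₀ x g = Ifun α f₀ y g := congrFun hI0 g
      simp only [Ifun] at this
      simp [this]
    have h5 : dist (f (α.act g⁻¹ x)) (f₀ (α.act g⁻¹ x)) ≤ D := hx₀ _
    have h6 : dist (f₀ (α.act g⁻¹ y)) (f (α.act g⁻¹ y)) ≤ D := by
      rw [dist_comm]; exact hx₀ _
    show dist (f (α.act g⁻¹ x)) (f (α.act g⁻¹ y)) ≤ 2 * D
    linarith
  have hsum : (∑' g : G, ENNReal.ofReal (c g * dist (Ifun α f x g) (Ifun α f y g))) ≤
      2 * ENNReal.ofReal D := by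
    have h1 : (∑' g : G, ENNReal.ofReal (c g * dist (Ifun α f x g) (Ifun α f y g))) ≤
        ∑' g : G, ENNReal.ofReal (c g * (2 * D)) := by
      refine ENNReal.tsum_le_tsum fun g => ENNReal.ofReal_le_ofReal ?_
      exact mul_le_mul_of_nonneg_left (hbound g) (hc g).le
    refine h1.trans ?_
    have h2 : ∀ g : G, ENNReal.ofReal (c g * (2 * D)) =
        ENNReal.ofReal (c g) * ENNReal.ofReal (2 * D) := fun g =>
      ENNReal.ofReal_mul (hc g).le
    calc (∑' g : G, ENNReal.ofReal (c g * (2 * D)))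
        = (∑' g : G, ENNReal.ofReal (c g)) * ENNReal.ofReal (2 * D) := by
          simp_rw [h2]; exact ENNReal.tsum_mul_right
      _ = ENNReal.ofReal (2 * D) := by
          rw [← ENNReal.ofReal_tsum_of_nonneg (fun g => (hc g).le) hcs, hc1]
          simp
      _ = 2 * ENNReal.ofReal D := by
          rw [ENNReal.ofReal_mul (by norm_num : (0:ℝ) ≤ 2), ENNReal.ofReal_ofNat]
      _ ≤ 2 * ENNReal.ofReal D := le_rfl
  have : sInf S < sInf S := lt_of_le_of_lt (hsle.trans hsum) (hdist x₀)
  exact absurd this (lt_irrefl _)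

theorem stmt9 {G X Y : Type*} [Group G] [Countable G] [MetricSpace X] [CompactSpace X]
    [TopologicalSpace Y] [CompactSpace Y] [TopologicalSpace.MetrizableSpace Y] (m : ℕ)
    (α : GAction G X) (hα : ∀ g, Continuous (α.act g))
    (π : X → Y) (hπ : Continuous π) (η : ℝ) (hη : 0 < η)
    (c : G → ℝ) (hc : ∀ g, 0 < c g) (hcs : Summable c) (hc1 : ∑' g, c g = 1)
    (f : X → Fin m → unitInterval) (hf : Continuous f)
    (hfemb : IsEpsEmbedding (fun x => (Ifun α f x, π x)) η)
    (δ : ℝ≥0∞)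
    (hδ : 2 * δ = sInf {r : ℝ≥0∞ | ∃ x y : X, π x = π y ∧ η ≤ dist x y ∧
      r = ∑' g : G, ENNReal.ofReal (c g * dist (Ifun α f x g) (Ifun α f y g))}) :
    0 < δ ∧
    (∀ f₀ : X → Fin m → unitInterval, Continuous f₀ →
      (∀ x, ENNReal.ofReal (dist (f x) (f₀ x)) < δ) →
      IsEpsEmbedding (fun x => (Ifun α f₀ x, π x)) η) ∧
    IsOpen {f' : C(X, Fin m → unitInterval) |
      IsEpsEmbedding (fun x => (Ifun α (⇑f') x, π x)) η} := by
  obtain ⟨hpos, hkey⟩ := master_lemma α hα π hπ η hη c hc hcs hc1 f hf hfemb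
  have hδpos : 0 < δ := by
    by_contra h
    have : δ = 0 := by simpa [pos_iff_ne_zero] using h
    rw [this, mul_zero] at hδ
    exact absurd (hδ ▸ hpos) (lt_irrefl _)
  refine ⟨hδpos, ?_, ?_⟩
  · intro f₀ hf₀ hdist
    refine hkey f₀ hf₀ fun x => ?_
    calc 2 * ENNReal.ofReal (dist (f x) (f₀ x)) < 2 * δ :=
          ENNReal.mul_lt_mul_right (by norm_num) (by norm_num) (hdist x)
      _ = _ := hδ
  · rw [Metric.isOpen_iff]
    intro f' hf'
    obtain ⟨hpos', hkey'⟩ := master_lemma α hα π hπ η hη c hc hcs hc1 (⇑f') f'.continuous hf'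
    obtain ⟨t, ht0, hts⟩ := exists_between hpos'
    have htne : t ≠ ⊤ := hts.ne_top
    have htr : 0 < t.toReal := ENNReal.toReal_pos ht0.ne' htne
    refine ⟨t.toReal / 2, by linarith, fun f₀ hball => ?_⟩
    refine hkey' (⇑f₀) f₀.continuous fun x => ?_
    have hd : dist (f' x) (f₀ x) ≤ dist f₀ f' := by
      rw [dist_comm]
      exact ContinuousMap.dist_apply_le_dist x
    have hdlt : dist (f' x) (f₀ x) ≤ t.toReal / 2 :=
      hd.trans (Metric.mem_ball.mp hball).le
    calc 2 * ENNReal.ofReal (dist (f' x) (f₀ x))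
        ≤ 2 * ENNReal.ofReal (t.toReal / 2) :=
          mul_le_mul_right (ENNReal.ofReal_le_ofReal hdlt) 2
      _ = ENNReal.ofReal 2 * ENNReal.ofReal (t.toReal / 2) := by norm_num
      _ = ENNReal.ofReal (2 * (t.toReal / 2)) := (ENNReal.ofReal_mul (by norm_num)).symm
      _ = ENNReal.ofReal t.toReal := by
          rw [show (2:ℝ) * (t.toReal / 2) = t.toReal by ring]
      _ = t := ENNReal.ofReal_toReal htne
      _ < _ := hts
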